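/- arXiv:1809.05870 — 6 statements merged into one kernel-verified Lean document; each statement's English description precedes it below -/
import Mathlib

section
/- Let n ≥ 1, let R be a symmetric positive semidefinite n×n real matrix, F ∈ ℝⁿ, and v > 0 a real number. Then the matrix M := R − (R F)(R F)ᵀ/(⟨F, R F⟩ + v) is positive semidefinite. Consequently, if in addition R = G M Gᵀ + W for an n×n real matrix G and a symmetric n×n matrix W (i.e., R satisfies the Riccati fixed-point equation), then R − W is positive semidefinite; in particular, if W is positive definite then R is positive definite. -/
open Matrix

/-- Cauchy–Schwarz inequality for a positive semidefinite real matrix. -/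
lemma psd_cauchy_schwarz {n : ℕ} {R : Matrix (Fin n) (Fin n) ℝ} (hR : R.PosSemidef)
    (x y : Fin n → ℝ) :
    (x ⬝ᵥ R *ᵥ y) ^ 2 ≤ (x ⬝ᵥ R *ᵥ x) * (y ⬝ᵥ R *ᵥ y) := by
  have hRs : Rᵀ = R := R.conjTranspose_eq_transpose_of_trivial ▸ hR.1
  have hsym : ∀ a b : Fin n → ℝ, a ⬝ᵥ R *ᵥ b = b ⬝ᵥ R *ᵥ a := fun a b => by
    rw [dotProduct_mulVec, ← mulVec_transpose, hRs, dotProduct_comm]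
  have h := discrim_le_zero (a := y ⬝ᵥ R *ᵥ y) (b := 2 * (x ⬝ᵥ R *ᵥ y)) (c := x ⬝ᵥ R *ᵥ x) ?_
  · rw [discrim] at h; nlinarith [h]
  · intro t
    have h0 := hR.dotProduct_mulVec_nonneg (x + t • y)
    simp only [star_trivial] at h0
    have : (x + t • y) ⬝ᵥ R *ᵥ (x + t • y)
        = (y ⬝ᵥ R *ᵥ y) * (t * t) + 2 * (x ⬝ᵥ R *ᵥ y) * t + x ⬝ᵥ R *ᵥ x := by
      rw [mulVec_add, dotProduct_add, add_dotProduct, add_dotProduct,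
        mulVec_smul, smul_dotProduct, dotProduct_smul, hsym y x]
      simp [smul_eq_mul]; ring
    linarith [this ▸ h0]

/-- For `n ≥ 1`, a symmetric positive semidefinite `R`, `F ∈ ℝⁿ` and `v > 0`,
the matrix `M := R − (R F)(R F)ᵀ/(⟨F, R F⟩ + v)` is positive semidefinite. Consequently,
if moreover `R = G M Gᵀ + W` with `W` symmetric, then `R − W` is positive semidefinite;
in particular if `W` is positive definite then `R` is positive definite. -/
theorem stmt_0 {n : ℕ} (hn : 1 ≤ n) (R G W : Matrix (Fin n) (Fin n) ℝ)
    (F : Fin n → ℝ) (v : ℝ) (hv : 0 < v) (hR : R.PosSemidef) (hW : W.IsSymm) :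
    (R - (F ⬝ᵥ (R *ᵥ F) + v)⁻¹ • vecMulVec (R *ᵥ F) (R *ᵥ F)).PosSemidef ∧
    (R = G * (R - (F ⬝ᵥ (R *ᵥ F) + v)⁻¹ • vecMulVec (R *ᵥ F) (R *ᵥ F)) * Gᵀ + W →
      (R - W).PosSemidef ∧ (W.PosDef → R.PosDef)) := by
  set u : Fin n → ℝ := R *ᵥ F with hu
  set c : ℝ := F ⬝ᵥ u + v with hc
  have hF0 : 0 ≤ F ⬝ᵥ u := by simpa using hR.dotProduct_mulVec_nonneg F
  have hcpos : 0 < c := by positivity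
  have hRs : Rᵀ = R := R.conjTranspose_eq_transpose_of_trivial ▸ hR.1
  set M : Matrix (Fin n) (Fin n) ℝ := R - c⁻¹ • vecMulVec u u with hM
  have hvm : ∀ x : Fin n → ℝ, vecMulVec u u *ᵥ x = (u ⬝ᵥ x) • u := by
    intro x; funext i
    simp only [mulVec, dotProduct, vecMulVec_apply, Pi.smul_apply, smul_eq_mul]
    rw [Finset.sum_mul]
    exact Finset.sum_congr rfl fun j _ => by ring
  have hMh : M.IsHermitian := by
    show Mᴴ = M
    ext i j
    simp only [hM, conjTranspose_apply, Matrix.sub_apply, Matrix.smul_apply, vecMulVec_apply,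
      star_trivial, smul_eq_mul]
    rw [show R j i = R i j by simpa using congrFun (congrFun hRs i) j]
    ring
  have hMps : M.PosSemidef := by
    refine PosSemidef.of_dotProduct_mulVec_nonneg hMh fun x => ?_
    simp only [star_trivial, hM, sub_mulVec, dotProduct_sub, smul_mulVec,
      dotProduct_smul, hvm, smul_eq_mul]
    have hcs : (x ⬝ᵥ u) ^ 2 ≤ (x ⬝ᵥ R *ᵥ x) * (F ⬝ᵥ u) := by
      simpa [hu] using psd_cauchy_schwarz hR x F
    have hx0 : 0 ≤ x ⬝ᵥ R *ᵥ x := by simpa using hR.dotProduct_mulVec_nonneg x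
    rw [sub_nonneg, dotProduct_comm u x, ← pow_two]
    calc c⁻¹ * (x ⬝ᵥ u) ^ 2 ≤ c⁻¹ * ((x ⬝ᵥ R *ᵥ x) * c) := by
          apply mul_le_mul_of_nonneg_left _ (le_of_lt (inv_pos.2 hcpos))
          calc (x ⬝ᵥ u) ^ 2 ≤ (x ⬝ᵥ R *ᵥ x) * (F ⬝ᵥ u) := hcs
            _ ≤ (x ⬝ᵥ R *ᵥ x) * c := by
                apply mul_le_mul_of_nonneg_left _ hx0
                simp [hc]; linarith
      _ = x ⬝ᵥ R *ᵥ x := by field_simp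
  refine ⟨hMps, fun heq => ?_⟩
  have hRW : (R - W).PosSemidef := by
    have : R - W = G * M * Gᴴ := by
      rw [G.conjTranspose_eq_transpose_of_trivial, heq]; abel
    rw [this]
    exact hMps.mul_mul_conjTranspose_same G
  refine ⟨hRW, fun hWpd => ?_⟩
  have : R = (R - W) + W := by abel
  rw [this]
  exact Matrix.PosDef.posSemidef_add hRW hWpd
end

section
/- Let n ≥ 1, let G be a real n×n matrix, F ∈ ℝⁿ, v > 0, W a symmetric n×n real matrix, and let R be a symmetric positive semidefinite n×n matrix satisfying the Riccati fixed-point equation R = G(R − (R F)(R F)ᵀ/(⟨F, R F⟩ + v))Gᵀ + W. For x ∈ ℝⁿ define y := Gᵀx − (⟨R Gᵀx, F⟩/(⟨R F, F⟩ + v))·F. Then ⟨R y, y⟩ = ⟨R x, x⟩ − ⟨W x, x⟩ − (v/(⟨R F, F⟩ + v)²)·⟨R Gᵀx, F⟩². -/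
open Matrix

lemma vecMulVec_mulVec' {n : ℕ} (w u p : Fin n → ℝ) :
    vecMulVec w u *ᵥ p = (u ⬝ᵥ p) • w := by
  ext i
  simp [mulVec, vecMulVec_apply, dotProduct, Finset.mul_sum, mul_comm, mul_assoc, mul_left_comm]

/-- If the symmetric positive semidefinite `R` satisfies the Riccati
fixed-point equation, then for `x ∈ ℝⁿ` and
`y := Gᵀx − (⟨R Gᵀx, F⟩/(⟨R F, F⟩ + v))·F` one has
`⟨R y, y⟩ = ⟨R x, x⟩ − ⟨W x, x⟩ − (v/(⟨R F, F⟩ + v)²)·⟨R Gᵀx, F⟩²`. -/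
theorem stmt_2 {n : ℕ} (hn : 1 ≤ n) (R G W : Matrix (Fin n) (Fin n) ℝ)
    (F : Fin n → ℝ) (v : ℝ) (hv : 0 < v) (hR : R.PosSemidef) (hW : W.IsSymm)
    (hRic : R = G * (R - (F ⬝ᵥ (R *ᵥ F) + v)⁻¹ • vecMulVec (R *ᵥ F) (R *ᵥ F)) * Gᵀ + W)
    (x y : Fin n → ℝ)
    (hy : y = Gᵀ *ᵥ x - (((R *ᵥ (Gᵀ *ᵥ x)) ⬝ᵥ F) / ((R *ᵥ F) ⬝ᵥ F + v)) • F) :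
    (R *ᵥ y) ⬝ᵥ y =
      (R *ᵥ x) ⬝ᵥ x - (W *ᵥ x) ⬝ᵥ x
        - (v / ((R *ᵥ F) ⬝ᵥ F + v) ^ 2) * ((R *ᵥ (Gᵀ *ᵥ x)) ⬝ᵥ F) ^ 2 := by
  set z := Gᵀ *ᵥ x with hz
  set a := (R *ᵥ z) ⬝ᵥ F with ha
  set c := (R *ᵥ F) ⬝ᵥ F + v with hc
  have hRsym : Rᵀ = R := hR.1
  have hFRF : F ⬝ᵥ (R *ᵥ F) = (R *ᵥ F) ⬝ᵥ F := dotProduct_comm _ _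
  have hcpos : 0 < c := by
    have h0 : 0 ≤ F ⬝ᵥ (R *ᵥ F) := by simpa using hR.dotProduct_mulVec_nonneg F
    rw [hFRF] at h0
    rw [hc]; linarith
  have hcne : c ≠ 0 := ne_of_gt hcpos
  -- symmetry fact
  have hsymm : ∀ u w : Fin n → ℝ, (R *ᵥ u) ⬝ᵥ w = (R *ᵥ w) ⬝ᵥ u := by
    intro u w
    rw [dotProduct_comm, dotProduct_mulVec, ← mulVec_transpose, hRsym, dotProduct_comm]
  -- key identity from Riccati equation
  have h2 : (R *ᵥ x) ⬝ᵥ x = (R *ᵥ z) ⬝ᵥ z - a ^ 2 / c + (W *ᵥ x) ⬝ᵥ x := by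
    have hstep := congrArg (fun M => (M *ᵥ x) ⬝ᵥ x) hRic
    simp only [add_mulVec, add_dotProduct, Matrix.mul_assoc, ← mulVec_mulVec,
      sub_mulVec, smul_mulVec, vecMulVec_mulVec', sub_dotProduct, smul_dotProduct] at hstep
    have hG : ∀ u : Fin n → ℝ, (G *ᵥ u) ⬝ᵥ x = u ⬝ᵥ z := by
      intro u
      rw [dotProduct_comm, dotProduct_mulVec, ← mulVec_transpose, dotProduct_comm]
    rw [← hz] at hstep
    rw [hstep, hG]
    simp only [sub_dotProduct, smul_dotProduct, smul_eq_mul]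
    have hRFz : (R *ᵥ F) ⬝ᵥ z = a := hsymm F z
    rw [hRFz, hFRF]
    have : (R *ᵥ F) ⬝ᵥ F + v = c := hc.symm
    rw [this, ha]
    field_simp
  -- expand left side
  have hRy : R *ᵥ y = R *ᵥ z - (a / c) • (R *ᵥ F) := by
    rw [hy, mulVec_sub, mulVec_smul]
  rw [hRy, hy]
  simp only [sub_dotProduct, dotProduct_sub, smul_dotProduct, dotProduct_smul, smul_eq_mul]
  have hRFz : (R *ᵥ F) ⬝ᵥ z = a := hsymm F z
  have hRzF : (R *ᵥ z) ⬝ᵥ F = a := rfl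
  have hRFF : (R *ᵥ F) ⬝ᵥ F = c - v := by rw [hc]; ring
  rw [hRFz, hRzF, hRFF, h2]
  field_simp
  ring
end

section
/- Let n ≥ 1, let G be a real n×n matrix, F ∈ ℝⁿ, v > 0, W a symmetric positive semidefinite n×n real matrix, and let R be a symmetric positive semidefinite n×n matrix satisfying the Riccati fixed-point equation R = G(R − (R F)(R F)ᵀ/(⟨F, R F⟩ + v))Gᵀ + W. For x ∈ ℝⁿ define y := Gᵀx − (⟨R Gᵀx, F⟩/(⟨R F, F⟩ + v))·F. Then ⟨R y, y⟩ ≤ ⟨R x, x⟩ − ⟨W x, x⟩; in particular, ⟨R y, y⟩ ≤ ⟨R x, x⟩, i.e., the quadratic form x ↦ ⟨R x, x⟩ is non-increasing under the map x ↦ y. -/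
open Matrix

lemma vecMulVec_mulVec_aux {n : ℕ} (u w z : Fin n → ℝ) :
    vecMulVec u w *ᵥ z = (w ⬝ᵥ z) • u := by
  ext i
  simp only [vecMulVec_apply, mulVec, dotProduct, Pi.smul_apply, smul_eq_mul, of_apply,
    Finset.sum_mul, Finset.mul_sum]
  exact Finset.sum_congr rfl fun j _ => by ring

/-- If the symmetric positive semidefinite `R` satisfies the Riccati
fixed-point equation with `W` symmetric positive semidefinite, then for `x ∈ ℝⁿ` and
`y := Gᵀx − (⟨R Gᵀx, F⟩/(⟨R F, F⟩ + v))·F` one has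
`⟨R y, y⟩ ≤ ⟨R x, x⟩ − ⟨W x, x⟩`; in particular `⟨R y, y⟩ ≤ ⟨R x, x⟩`. -/
theorem stmt_3 {n : ℕ} (hn : 1 ≤ n) (R G W : Matrix (Fin n) (Fin n) ℝ)
    (F : Fin n → ℝ) (v : ℝ) (hv : 0 < v) (hR : R.PosSemidef) (hW : W.PosSemidef)
    (hRic : R = G * (R - (F ⬝ᵥ (R *ᵥ F) + v)⁻¹ • vecMulVec (R *ᵥ F) (R *ᵥ F)) * Gᵀ + W)
    (x y : Fin n → ℝ)
    (hy : y = Gᵀ *ᵥ x - (((R *ᵥ (Gᵀ *ᵥ x)) ⬝ᵥ F) / ((R *ᵥ F) ⬝ᵥ F + v)) • F) :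
    (R *ᵥ y) ⬝ᵥ y ≤ (R *ᵥ x) ⬝ᵥ x - (W *ᵥ x) ⬝ᵥ x ∧
    (R *ᵥ y) ⬝ᵥ y ≤ (R *ᵥ x) ⬝ᵥ x := by
  have hRT : Rᵀ = R := by
    have h := hR.1
    ext i j
    simpa using congrFun (congrFun h i) j
  set z := Gᵀ *ᵥ x with hz
  set a := (R *ᵥ F) ⬝ᵥ F with ha
  set b := (R *ᵥ z) ⬝ᵥ F with hb
  set p := (R *ᵥ z) ⬝ᵥ z with hp
  have ha0 : 0 ≤ a := by
    have h := hR.dotProduct_mulVec_nonneg F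
    simpa [ha, dotProduct_comm] using h
  have hc : 0 < a + v := by linarith
  have hcne : a + v ≠ 0 := ne_of_gt hc
  have hsym : (R *ᵥ F) ⬝ᵥ z = b := by
    rw [dotProduct_comm, dotProduct_mulVec, ← mulVec_transpose, hRT, hb]
  have haF : F ⬝ᵥ (R *ᵥ F) = a := by rw [ha, dotProduct_comm]
  have hLHS : (R *ᵥ y) ⬝ᵥ y = p - 2 * (b / (a + v)) * b + (b / (a + v))^2 * a := by
    rw [hy]
    simp only [mulVec_sub, mulVec_smul, sub_dotProduct, dotProduct_sub,
      dotProduct_smul, smul_dotProduct, smul_eq_mul, ← hz, ← hb, ← hp, hsym, ← ha]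
    ring
  have hvmv : vecMulVec (R *ᵥ F) (R *ᵥ F) *ᵥ z = ((R *ᵥ F) ⬝ᵥ z) • (R *ᵥ F) :=
    vecMulVec_mulVec_aux _ _ _
  have hRHS : (R *ᵥ x) ⬝ᵥ x - (W *ᵥ x) ⬝ᵥ x = p - (a + v)⁻¹ * (b * b) := by
    conv_lhs => rw [hRic]
    rw [add_mulVec, add_dotProduct, add_sub_cancel_right, haF, ← mulVec_mulVec,
      ← mulVec_mulVec, dotProduct_comm, dotProduct_mulVec, ← mulVec_transpose, ← hz]
    rw [sub_mulVec, smul_mulVec, hvmv, hsym]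
    simp only [dotProduct_sub, dotProduct_smul, smul_eq_mul]
    rw [dotProduct_comm z (R *ᵥ z), ← hp, dotProduct_comm z (R *ᵥ F), hsym]
  have hdiff : (R *ᵥ x) ⬝ᵥ x - (W *ᵥ x) ⬝ᵥ x - (R *ᵥ y) ⬝ᵥ y = b^2 * v / (a + v)^2 := by
    rw [hLHS, hRHS]
    field_simp
    ring
  have hpos : 0 ≤ b^2 * v / (a + v)^2 := by positivity
  have hW0 : 0 ≤ (W *ᵥ x) ⬝ᵥ x := by
    have h := hW.dotProduct_mulVec_nonneg x
    simpa [dotProduct_comm] using h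
  constructor <;> linarith
end

section
/- (Main contraction theorem.) Let n ≥ 1, let G be a real n×n matrix, F ∈ ℝⁿ, v > 0, W a symmetric positive definite n×n real matrix, and let R be a symmetric positive semidefinite n×n matrix satisfying the Riccati fixed-point equation R = G(R − (R F)(R F)ᵀ/(⟨F, R F⟩ + v))Gᵀ + W. Set A := R F/(⟨F, R F⟩ + v). Then there exists γ with 0 ≤ γ < 1 such that for every x ∈ ℝⁿ, writing z := Gᵀx − ⟨A, Gᵀx⟩·F (that is, z = (I − A⊗F)Gᵀ x, where A⊗F is the linear map u ↦ ⟨u, A⟩F), one has ⟨R z, z⟩ ≤ γ·⟨R x, x⟩. -/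
open Matrix

lemma aux_dp_nonneg {n : ℕ} (x : Fin n → ℝ) : 0 ≤ x ⬝ᵥ x :=
  Finset.sum_nonneg fun i _ => mul_self_nonneg (x i)

lemma aux_vecMulVec_mulVec {n : ℕ} (u w y : Fin n → ℝ) :
    vecMulVec u w *ᵥ y = (w ⬝ᵥ y) • u := by
  ext i
  simp [vecMulVec_apply, mulVec, dotProduct, Finset.mul_sum, mul_comm, mul_assoc, mul_left_comm]

lemma aux_upper {n : ℕ} (R : Matrix (Fin n) (Fin n) ℝ) (x : Fin n → ℝ) :
    (R *ᵥ x) ⬝ᵥ x ≤ (∑ i, ∑ j, |R i j|) * (x ⬝ᵥ x) := by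
  have hS : ∀ k, x k ^ 2 ≤ x ⬝ᵥ x := by
    intro k
    have h := Finset.single_le_sum (fun j (_ : j ∈ Finset.univ) => mul_self_nonneg (x j))
      (Finset.mem_univ k)
    simpa [dotProduct, pow_two] using h
  have hxx : 0 ≤ x ⬝ᵥ x := aux_dp_nonneg x
  have key : ∀ i j, R i j * x j * x i ≤ |R i j| * (x ⬝ᵥ x) := by
    intro i j
    have h3 : |x j * x i| ≤ x ⬝ᵥ x := by
      rw [abs_mul]
      nlinarith [hS i, hS j, sq_nonneg (|x j| - |x i|), abs_nonneg (x i), abs_nonneg (x j),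
        sq_abs (x i), sq_abs (x j)]
    calc R i j * x j * x i = R i j * (x j * x i) := by ring
      _ ≤ |R i j * (x j * x i)| := le_abs_self _
      _ = |R i j| * |x j * x i| := abs_mul _ _
      _ ≤ |R i j| * (x ⬝ᵥ x) := mul_le_mul_of_nonneg_left h3 (abs_nonneg _)
  calc (R *ᵥ x) ⬝ᵥ x = ∑ i, ∑ j, R i j * x j * x i := by
        simp [mulVec, dotProduct, Finset.sum_mul]
    _ ≤ ∑ i, ∑ j, |R i j| * (x ⬝ᵥ x) :=
        Finset.sum_le_sum fun i _ => Finset.sum_le_sum fun j _ => key i j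
    _ = (∑ i, ∑ j, |R i j|) * (x ⬝ᵥ x) := by
        rw [Finset.sum_mul]; exact Finset.sum_congr rfl fun i _ => (Finset.sum_mul _ _ _).symm

lemma aux_lower {n : ℕ} (hn : 1 ≤ n) (W : Matrix (Fin n) (Fin n) ℝ) (hW : W.PosDef) :
    ∃ α : ℝ, 0 < α ∧ ∀ x : Fin n → ℝ, α * (x ⬝ᵥ x) ≤ (W *ᵥ x) ⬝ᵥ x := by
  set E := EuclideanSpace ℝ (Fin n)
  let f : E → ℝ := fun x => ∑ i, (∑ j, W i j * x j) * x i
  have hfeq : ∀ x : E, f x = (W *ᵥ (x : Fin n → ℝ)) ⬝ᵥ (x : Fin n → ℝ) := by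
    intro x; rfl
  have hf : Continuous f := by
    apply continuous_finset_sum
    intro i _
    exact (continuous_finset_sum _ fun j _ =>
      continuous_const.mul ((continuous_apply j).comp (PiLp.continuous_ofLp 2 _))).mul
        ((continuous_apply i).comp (PiLp.continuous_ofLp 2 _))
  have hne : (Metric.sphere (0 : E) 1).Nonempty := by
    refine ⟨EuclideanSpace.single ⟨0, hn⟩ (1:ℝ), ?_⟩
    rw [mem_sphere_zero_iff_norm, EuclideanSpace.norm_single]
    norm_num
  obtain ⟨x₀, hx₀mem, hx₀min⟩ :=
    (isCompact_sphere (0 : E) 1).exists_isMinOn hne hf.continuousOn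
  have hx₀norm : ‖x₀‖ = 1 := by simpa using hx₀mem
  have hx₀ne : (x₀ : Fin n → ℝ) ≠ 0 := by
    intro h
    have h0 : x₀ = 0 := (WithLp.ofLp_eq_zero 2).mp h
    rw [h0] at hx₀norm; simp at hx₀norm
  have hα : 0 < f x₀ := by
    rw [hfeq, dotProduct_comm]
    simpa using hW.re_dotProduct_pos hx₀ne
  refine ⟨f x₀, hα, ?_⟩
  intro x
  by_cases hx : (x : Fin n → ℝ) = 0
  · simp [hx]
  · set xE : E := WithLp.toLp 2 x with hxE
    have hxEne : xE ≠ 0 := (WithLp.toLp_eq_zero 2).not.mpr hx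
    have hnorm : 0 < ‖xE‖ := norm_pos_iff.mpr hxEne
    set u : E := ‖xE‖⁻¹ • xE with hu
    have humem : u ∈ Metric.sphere (0 : E) 1 := by
      rw [mem_sphere_zero_iff_norm, hu, norm_smul]
      simp [abs_of_pos (inv_pos.mpr hnorm), inv_mul_cancel₀ hnorm.ne']
    have hmin : f x₀ ≤ f u := hx₀min humem
    have hfu : f u = ‖xE‖⁻¹ * ‖xE‖⁻¹ * ((W *ᵥ x) ⬝ᵥ x) := by
      rw [hfeq]
      show (W *ᵥ (‖xE‖⁻¹ • x)) ⬝ᵥ (‖xE‖⁻¹ • x) = _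
      rw [mulVec_smul, smul_dotProduct, dotProduct_smul, smul_eq_mul, smul_eq_mul]
      ring
    have hxx : x ⬝ᵥ x = ‖xE‖ ^ 2 := by
      rw [hxE, EuclideanSpace.norm_eq, Real.sq_sqrt (by positivity)]
      simp [dotProduct, Real.norm_eq_abs, sq_abs, pow_two]
    rw [hxx]
    show f x₀ * ‖xE‖ ^ 2 ≤ (W *ᵥ x) ⬝ᵥ x
    have h2 : f x₀ ≤ ‖xE‖⁻¹ * ‖xE‖⁻¹ * ((W *ᵥ x) ⬝ᵥ x) := hfu ▸ hmin
    have h4 : ‖xE‖⁻¹ * ‖xE‖⁻¹ * ((W *ᵥ x) ⬝ᵥ x) * ‖xE‖ ^ 2 = (W *ᵥ x) ⬝ᵥ x := by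
      rw [pow_two]
      field_simp
    calc f x₀ * ‖xE‖ ^ 2 ≤ ‖xE‖⁻¹ * ‖xE‖⁻¹ * ((W *ᵥ x) ⬝ᵥ x) * ‖xE‖ ^ 2 :=
          mul_le_mul_of_nonneg_right h2 (sq_nonneg ‖xE‖)
      _ = (W *ᵥ x) ⬝ᵥ x := h4

/-- Main contraction theorem: Let `R` be a symmetric positive semidefinite
solution of the Riccati fixed-point equation, with `W` symmetric positive definite and
`v > 0`. Set `A := R F/(⟨F, R F⟩ + v)`. Then there is `γ ∈ [0,1)` such that for every
`x ∈ ℝⁿ`, for `z := Gᵀx − ⟨A, Gᵀx⟩·F = (I − A⊗F)Gᵀ x`, one has `⟨R z, z⟩ ≤ γ·⟨R x, x⟩`. -/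
theorem stmt_5 {n : ℕ} (hn : 1 ≤ n) (R G W : Matrix (Fin n) (Fin n) ℝ)
    (F : Fin n → ℝ) (v : ℝ) (hv : 0 < v) (hR : R.PosSemidef) (hW : W.PosDef)
    (hRic : R = G * (R - (F ⬝ᵥ (R *ᵥ F) + v)⁻¹ • vecMulVec (R *ᵥ F) (R *ᵥ F)) * Gᵀ + W)
    (A : Fin n → ℝ) (hA : A = (F ⬝ᵥ (R *ᵥ F) + v)⁻¹ • (R *ᵥ F)) :
    ∃ γ : ℝ, 0 ≤ γ ∧ γ < 1 ∧ ∀ x z : Fin n → ℝ,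
      z = Gᵀ *ᵥ x - (A ⬝ᵥ (Gᵀ *ᵥ x)) • F →
      (R *ᵥ z) ⬝ᵥ z ≤ γ * ((R *ᵥ x) ⬝ᵥ x) := by
  obtain ⟨α, hα, hαle⟩ := aux_lower hn W hW
  set β : ℝ := (∑ i, ∑ j, |R i j|) + 1 with hβdef
  have hβpos : 0 < β := by
    have : (0:ℝ) ≤ ∑ i, ∑ j, |R i j| :=
      Finset.sum_nonneg fun i _ => Finset.sum_nonneg fun j _ => abs_nonneg _
    linarith
  have hβ : ∀ x : Fin n → ℝ, (R *ᵥ x) ⬝ᵥ x ≤ β * (x ⬝ᵥ x) := by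
    intro x
    have h := aux_upper R x
    have hxx : 0 ≤ x ⬝ᵥ x := aux_dp_nonneg x
    nlinarith
  have hRT : Rᵀ = R := by
    ext i j
    have h := congrFun (congrFun hR.1 i) j
    simpa [conjTranspose_apply] using h
  set c : ℝ := F ⬝ᵥ (R *ᵥ F) + v with hc
  have hFRF : 0 ≤ F ⬝ᵥ (R *ᵥ F) := by
    simpa [dotProduct_comm] using hR.re_dotProduct_nonneg F
  have hcpos : 0 < c := by positivity
  refine ⟨1 - min (α / β) 1, by simp [min_le_iff], by
    have : 0 < min (α / β) 1 := lt_min (div_pos hα hβpos) one_pos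
    linarith, ?_⟩
  intro x z hz
  set y : Fin n → ℝ := Gᵀ *ᵥ x with hy
  set s : ℝ := (R *ᵥ F) ⬝ᵥ y with hs
  set Q : ℝ := (R *ᵥ y) ⬝ᵥ y with hQ
  have hAy : A ⬝ᵥ y = c⁻¹ * s := by rw [hA]; simp [smul_dotProduct, hs]
  have hsymm : F ᵥ* R = R *ᵥ F := by
    nth_rewrite 1 [← hRT]
    rw [vecMul_transpose]
  have hRyF : (R *ᵥ y) ⬝ᵥ F = s := by
    rw [dotProduct_comm, dotProduct_mulVec, hsymm, ← hs]
  have hRFF : (R *ᵥ F) ⬝ᵥ F = c - v := by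
    rw [dotProduct_comm]; simp [hc]
  have hzRz : (R *ᵥ z) ⬝ᵥ z = Q - 2 * (c⁻¹ * s) * s + (c⁻¹ * s) ^ 2 * (c - v) := by
    rw [hz, hAy]
    simp only [mulVec_sub, mulVec_smul, sub_dotProduct, dotProduct_sub, smul_dotProduct,
      dotProduct_smul, smul_eq_mul]
    rw [hRyF, hRFF, ← hs, ← hQ]
    ring
  have hxRx : (R *ᵥ x) ⬝ᵥ x = Q - c⁻¹ * s ^ 2 + (W *ᵥ x) ⬝ᵥ x := by
    conv_lhs => rw [hRic]
    rw [add_mulVec, add_dotProduct]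
    congr 1
    rw [← mulVec_mulVec, ← mulVec_mulVec, dotProduct_comm, dotProduct_mulVec,
      ← mulVec_transpose, ← hy, dotProduct_comm]
    simp only [sub_mulVec, sub_dotProduct, smul_mulVec, aux_vecMulVec_mulVec,
      smul_dotProduct, dotProduct_smul, smul_eq_mul]
    rw [← hs, ← hQ]
    ring
  have hstep : (R *ᵥ z) ⬝ᵥ z ≤ (R *ᵥ x) ⬝ᵥ x - (W *ᵥ x) ⬝ᵥ x := by
    rw [hzRz, hxRx]
    have h1 : 0 ≤ v * (c⁻¹ * s) ^ 2 := by positivity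
    have h2 : (c⁻¹ * s) ^ 2 * c = c⁻¹ * s ^ 2 := by
      field_simp
    nlinarith
  have hRxx : 0 ≤ (R *ᵥ x) ⬝ᵥ x := by
    simpa [dotProduct_comm] using hR.re_dotProduct_nonneg x
  have hW1 : min (α / β) 1 * ((R *ᵥ x) ⬝ᵥ x) ≤ (W *ᵥ x) ⬝ᵥ x := by
    have h1 : min (α / β) 1 * ((R *ᵥ x) ⬝ᵥ x) ≤ (α / β) * ((R *ᵥ x) ⬝ᵥ x) :=
      mul_le_mul_of_nonneg_right (min_le_left _ _) hRxx
    have h2 : (α / β) * ((R *ᵥ x) ⬝ᵥ x) ≤ (α / β) * (β * (x ⬝ᵥ x)) :=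
      mul_le_mul_of_nonneg_left (hβ x) (by positivity)
    have h3 : (α / β) * (β * (x ⬝ᵥ x)) = α * (x ⬝ᵥ x) := by field_simp
    linarith [hαle x]
  linarith [hstep, hW1]
end

section
/- (Exponential decay of the limit AR coefficients.) Let n ≥ 1, let G be a real n×n matrix, F ∈ ℝⁿ, v > 0, W a symmetric positive definite n×n real matrix, and let R be a symmetric positive semidefinite n×n matrix satisfying the Riccati fixed-point equation R = G(R − (R F)(R F)ᵀ/(⟨F, R F⟩ + v))Gᵀ + W. Set A := R F/(⟨F, R F⟩ + v) and Z := G(I − A Fᵀ). Then there exist c ≥ 0 and ρ with 0 ≤ ρ < 1 such that for every integer j ≥ 0, the coefficient θ_j := ⟨F, Zʲ G A⟩ satisfies |θ_j| ≤ c·ρʲ. -/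
open Matrix Finset
section Helpers
variable {n : ℕ}

lemma psd_nonneg {M : Matrix (Fin n) (Fin n) ℝ} (hM : M.PosSemidef) (x : Fin n → ℝ) :
    0 ≤ x ⬝ᵥ (M *ᵥ x) := by have := hM.dotProduct_mulVec_nonneg x; simpa using this

lemma mul_vmv (M : Matrix (Fin n) (Fin n) ℝ) (a b : Fin n → ℝ) :
    M * vecMulVec a b = vecMulVec (M *ᵥ a) b := by
  ext i j
  simp [mul_apply, vecMulVec_apply, mulVec, dotProduct, Finset.sum_mul, mul_assoc]

lemma vmv_mul (a b : Fin n → ℝ) (M : Matrix (Fin n) (Fin n) ℝ) :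
    vecMulVec a b * M = vecMulVec a (Mᵀ *ᵥ b) := by
  ext i j
  simp only [mul_apply, vecMulVec_apply, mulVec, transpose_apply, dotProduct, Finset.mul_sum]
  exact Finset.sum_congr rfl fun k _ => by ring

lemma vmv_smul (c : ℝ) (a b : Fin n → ℝ) : vecMulVec (c • a) b = c • vecMulVec a b := by
  ext i j; simp [vecMulVec_apply, mul_assoc]

lemma vmv_vmv (a b c d : Fin n → ℝ) :
    vecMulVec a b * vecMulVec c d = (b ⬝ᵥ c) • vecMulVec a d := by
  ext i j
  simp only [mul_apply, vecMulVec_apply, Matrix.smul_apply, dotProduct, smul_eq_mul, Finset.sum_mul]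
  exact Finset.sum_congr rfl fun k _ => by ring

lemma vmv_transpose (a b : Fin n → ℝ) : (vecMulVec a b)ᵀ = vecMulVec b a := by
  ext i j; simp [vecMulVec_apply, mul_comm]

lemma quad_vmv (a x : Fin n → ℝ) : x ⬝ᵥ (vecMulVec a a *ᵥ x) = (a ⬝ᵥ x) ^ 2 := by
  simp only [mulVec, vecMulVec_apply, dotProduct, sq, Finset.sum_mul, Finset.mul_sum]
  rw [Finset.sum_comm]
  exact Finset.sum_congr rfl fun i _ => Finset.sum_congr rfl fun j _ => by ring

lemma quad_conj (Z M : Matrix (Fin n) (Fin n) ℝ) (x : Fin n → ℝ) :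
    x ⬝ᵥ ((Z * M * Zᵀ) *ᵥ x) = (Zᵀ *ᵥ x) ⬝ᵥ (M *ᵥ (Zᵀ *ᵥ x)) := by
  rw [← mulVec_mulVec, ← mulVec_mulVec, dotProduct_mulVec x Z, ← mulVec_transpose]

lemma quad_le (M : Matrix (Fin n) (Fin n) ℝ) (x : Fin n → ℝ) :
    x ⬝ᵥ (M *ᵥ x) ≤ (∑ i, ∑ j, |M i j|) * (x ⬝ᵥ x) := by
  have hsq : ∀ i, x i ^ 2 ≤ x ⬝ᵥ x := by
    intro i
    have h : x ⬝ᵥ x = ∑ k, x k ^ 2 := by simp [dotProduct, sq]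
    rw [h]
    exact Finset.single_le_sum (f := fun k => x k ^ 2) (fun k _ => sq_nonneg _) (Finset.mem_univ i)
  have hterm : ∀ i j, x i * (M i j * x j) ≤ |M i j| * (x ⬝ᵥ x) := by
    intro i j
    have h1 := hsq i
    have h2 := hsq j
    have habs : |x i| * |x j| ≤ x ⬝ᵥ x := by
      nlinarith [sq_nonneg (|x i| - |x j|), sq_abs (x i), sq_abs (x j), abs_nonneg (x i), abs_nonneg (x j)]
    calc x i * (M i j * x j) ≤ |x i * (M i j * x j)| := le_abs_self _
      _ = |M i j| * (|x i| * |x j|) := by rw [abs_mul, abs_mul]; ring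
      _ ≤ |M i j| * (x ⬝ᵥ x) := by
          exact mul_le_mul_of_nonneg_left habs (abs_nonneg _)
  calc x ⬝ᵥ (M *ᵥ x) = ∑ i, ∑ j, x i * (M i j * x j) := by
        simp [dotProduct, mulVec, Finset.mul_sum]
    _ ≤ ∑ i, ∑ j, |M i j| * (x ⬝ᵥ x) := by
        exact Finset.sum_le_sum fun i _ => Finset.sum_le_sum fun j _ => hterm i j
    _ = (∑ i, ∑ j, |M i j|) * (x ⬝ᵥ x) := by rw [Finset.sum_mul]; exact Finset.sum_congr rfl fun i _ => by rw [Finset.sum_mul]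


lemma psd_nonneg' {M : Matrix (Fin n) (Fin n) ℝ} (hM : M.PosSemidef) (x : Fin n → ℝ) :
    0 ≤ x ⬝ᵥ (M *ᵥ x) := by have := hM.dotProduct_mulVec_nonneg x; simpa using this

lemma herm_transpose {M : Matrix (Fin n) (Fin n) ℝ} (hM : M.IsHermitian) : Mᵀ = M := by
  ext i j; simpa using congrFun (congrFun hM i) j

lemma cs_form {M : Matrix (Fin n) (Fin n) ℝ} (hM : M.PosSemidef) (x y : Fin n → ℝ) :
    (x ⬝ᵥ (M *ᵥ y)) ^ 2 ≤ (x ⬝ᵥ (M *ᵥ x)) * (y ⬝ᵥ (M *ᵥ y)) := by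
  have hMT : Mᵀ = M := herm_transpose hM.1
  have hsym : y ⬝ᵥ (M *ᵥ x) = x ⬝ᵥ (M *ᵥ y) := by
    rw [dotProduct_mulVec y M x, ← mulVec_transpose, hMT, dotProduct_comm]
  have key : ∀ t : ℝ, 0 ≤ (y ⬝ᵥ (M *ᵥ y)) * (t * t) + (2 * (x ⬝ᵥ (M *ᵥ y))) * t + x ⬝ᵥ (M *ᵥ x) := by
    intro t
    have h0 := psd_nonneg' hM (x + t • y)
    rw [mulVec_add, mulVec_smul, dotProduct_add, add_dotProduct, add_dotProduct,
      dotProduct_smul, smul_dotProduct, smul_dotProduct] at h0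
    rw [hsym] at h0
    simp only [smul_eq_mul, smul_dotProduct, dotProduct_smul] at h0
    nlinarith [h0]
  have hd : discrim (y ⬝ᵥ (M *ᵥ y)) (2 * (x ⬝ᵥ (M *ᵥ y))) (x ⬝ᵥ (M *ᵥ x)) ≤ 0 :=
    discrim_le_zero key
  rw [discrim] at hd
  nlinarith [hd]

lemma posdef_lb {W : Matrix (Fin n) (Fin n) ℝ} (hW : W.PosDef) :
    ∃ ε : ℝ, 0 < ε ∧ ∀ x : Fin n → ℝ, ε * (x ⬝ᵥ x) ≤ x ⬝ᵥ (W *ᵥ x) := by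
  have hdet : IsUnit W.det := isUnit_iff_ne_zero.2 (ne_of_gt hW.det_pos)
  have hinv : W * W⁻¹ = 1 := mul_nonsing_inv W hdet
  have hS : (0:ℝ) ≤ ∑ i, ∑ j, |W⁻¹ i j| :=
    Finset.sum_nonneg fun i _ => Finset.sum_nonneg fun j _ => abs_nonneg _
  set K : ℝ := (∑ i, ∑ j, |W⁻¹ i j|) + 1 with hK
  have hK0 : 0 < K := by rw [hK]; linarith
  refine ⟨1 / K, by rw [one_div]; exact inv_pos.2 hK0, fun x => ?_⟩
  by_cases hx : x ⬝ᵥ x = 0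
  · rw [hx, mul_zero]; exact psd_nonneg' hW.posSemidef x
  · have hxx : 0 < x ⬝ᵥ x := lt_of_le_of_ne (by
      have : x ⬝ᵥ x = ∑ k, x k ^ 2 := by simp [dotProduct, sq]
      rw [this]; exact Finset.sum_nonneg fun k _ => sq_nonneg _) (Ne.symm hx)
    have hWx : x = W *ᵥ (W⁻¹ *ᵥ x) := by rw [mulVec_mulVec, hinv, one_mulVec]
    have hcs : (x ⬝ᵥ x) ^ 2 ≤ (x ⬝ᵥ (W *ᵥ x)) * ((W⁻¹ *ᵥ x) ⬝ᵥ (W *ᵥ (W⁻¹ *ᵥ x))) := by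
      calc (x ⬝ᵥ x) ^ 2 = (x ⬝ᵥ (W *ᵥ (W⁻¹ *ᵥ x))) ^ 2 := by rw [← hWx]
        _ ≤ _ := cs_form hW.posSemidef x (W⁻¹ *ᵥ x)
    have h2 : (W⁻¹ *ᵥ x) ⬝ᵥ (W *ᵥ (W⁻¹ *ᵥ x)) ≤ K * (x ⬝ᵥ x) := by
      rw [← hWx, dotProduct_comm]
      calc x ⬝ᵥ (W⁻¹ *ᵥ x) ≤ (∑ i, ∑ j, |W⁻¹ i j|) * (x ⬝ᵥ x) := quad_le _ x
        _ ≤ K * (x ⬝ᵥ x) := by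
            apply mul_le_mul_of_nonneg_right _ (le_of_lt hxx)
            linarith
    have hWq : 0 ≤ x ⬝ᵥ (W *ᵥ x) := psd_nonneg' hW.posSemidef x
    have h3 : (x ⬝ᵥ x) ^ 2 ≤ (x ⬝ᵥ (W *ᵥ x)) * (K * (x ⬝ᵥ x)) :=
      hcs.trans (mul_le_mul_of_nonneg_left h2 hWq)
    rw [div_mul_eq_mul_div, div_le_iff₀ hK0]
    nlinarith [h3, hxx]


end Helpers

/-- Exponential decay of the limit AR coefficients: With `R` a symmetric
positive semidefinite solution of the Riccati fixed-point equation, `W` symmetric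
positive definite, `A := R F/(⟨F, R F⟩ + v)` and `Z := G(I − A Fᵀ)`, there exist
`c ≥ 0` and `ρ ∈ [0,1)` such that `|θ_j| = |⟨F, Zʲ G A⟩| ≤ c·ρʲ` for all `j ≥ 0`. -/
theorem stmt_7 {n : ℕ} (hn : 1 ≤ n) (R G W : Matrix (Fin n) (Fin n) ℝ)
    (F : Fin n → ℝ) (v : ℝ) (hv : 0 < v) (hR : R.PosSemidef) (hW : W.PosDef)
    (hRic : R = G * (R - (F ⬝ᵥ (R *ᵥ F) + v)⁻¹ • vecMulVec (R *ᵥ F) (R *ᵥ F)) * Gᵀ + W)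
    (A : Fin n → ℝ) (hA : A = (F ⬝ᵥ (R *ᵥ F) + v)⁻¹ • (R *ᵥ F))
    (Z : Matrix (Fin n) (Fin n) ℝ) (hZ : Z = G * (1 - vecMulVec A F)) :
    ∃ c ρ : ℝ, 0 ≤ c ∧ 0 ≤ ρ ∧ ρ < 1 ∧
      ∀ j : ℕ, |F ⬝ᵥ (Z ^ j *ᵥ (G *ᵥ A))| ≤ c * ρ ^ j := by
  have hdpnn : ∀ x : Fin n → ℝ, 0 ≤ x ⬝ᵥ x := by
    intro x
    have h : x ⬝ᵥ x = ∑ k, x k ^ 2 := by simp [dotProduct, sq]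
    rw [h]; exact Finset.sum_nonneg fun k _ => sq_nonneg _
  set u : Fin n → ℝ := R *ᵥ F with hu
  set s : ℝ := F ⬝ᵥ (R *ᵥ F) + v with hsdef
  have hs : 0 < s := add_pos_of_nonneg_of_pos (psd_nonneg hR F) hv
  have hsne : F ⬝ᵥ (R *ᵥ F) + v ≠ 0 := by rw [← hsdef]; exact hs.ne'
  have hRT : Rᵀ = R := herm_transpose hR.1
  have hZ2 : Z = G * (1 - s⁻¹ • vecMulVec u F) := by rw [hZ, hA, vmv_smul]
  have hZT : Zᵀ = (1 - s⁻¹ • vecMulVec F u) * Gᵀ := by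
    rw [hZ2, transpose_mul, transpose_sub, transpose_one, transpose_smul, vmv_transpose]
  have h1 : vecMulVec u F * R = vecMulVec u u := by rw [vmv_mul, hRT]
  have h2 : R * vecMulVec F u = vecMulVec u u := by rw [mul_vmv]
  have h3 : vecMulVec u u * vecMulVec F u = (s - v) • vecMulVec u u := by
    rw [vmv_vmv, dotProduct_comm]
    congr 1
    rw [hsdef]; ring
  have hmid : (1 - s⁻¹ • vecMulVec u F) * R * (1 - s⁻¹ • vecMulVec F u)
      = (R - s⁻¹ • vecMulVec u u) - (v * (s⁻¹ * s⁻¹)) • vecMulVec u u := by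
    rw [sub_mul, one_mul, smul_mul_assoc, h1, mul_sub, mul_one, mul_smul_comm,
      sub_mul, smul_mul_assoc, h2, h3]
    match_scalars <;> (field_simp [hsne]; try ring)
  have hGvv : G * vecMulVec u u * Gᵀ = vecMulVec (G *ᵥ u) (G *ᵥ u) := by
    rw [mul_vmv, vmv_mul, transpose_transpose]
  have hKey : R = Z * R * Zᵀ + (v * (s⁻¹ * s⁻¹)) • vecMulVec (G *ᵥ u) (G *ᵥ u) + W := by
    have hzz : Z * R * Zᵀ
        = G * (R - s⁻¹ • vecMulVec u u) * Gᵀ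
          - (v * (s⁻¹ * s⁻¹)) • vecMulVec (G *ᵥ u) (G *ᵥ u) := by
      rw [hZT, hZ2]
      have : G * (1 - s⁻¹ • vecMulVec u F) * R * ((1 - s⁻¹ • vecMulVec F u) * Gᵀ)
          = G * ((1 - s⁻¹ • vecMulVec u F) * R * (1 - s⁻¹ • vecMulVec F u)) * Gᵀ := by
        noncomm_ring
      rw [this, hmid, mul_sub, sub_mul, mul_smul_comm, smul_mul_assoc, hGvv]
    rw [hzz, sub_add_cancel]
    exact hRic
  have hquad : ∀ x : Fin n → ℝ,
      (Zᵀ *ᵥ x) ⬝ᵥ (R *ᵥ (Zᵀ *ᵥ x)) + (v * (s⁻¹ * s⁻¹)) * ((G *ᵥ u) ⬝ᵥ x) ^ 2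
        + x ⬝ᵥ (W *ᵥ x) = x ⬝ᵥ (R *ᵥ x) := by
    intro x
    conv_rhs => rw [hKey]
    rw [add_mulVec, add_mulVec, dotProduct_add, dotProduct_add, quad_conj,
      smul_mulVec, dotProduct_smul, quad_vmv]
    simp [smul_eq_mul]
  have hcoef0 : 0 ≤ v * (s⁻¹ * s⁻¹) := mul_nonneg hv.le (mul_self_nonneg _)
  obtain ⟨ε, hε, hWlb⟩ := posdef_lb hW
  have hS0 : (0:ℝ) ≤ ∑ i, ∑ j, |R i j| :=
    Finset.sum_nonneg fun i _ => Finset.sum_nonneg fun j _ => abs_nonneg _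
  set SR : ℝ := (∑ i, ∑ j, |R i j|) + 1 with hSRdef
  have hSR0 : 0 < SR := by rw [hSRdef]; linarith
  have hRub : ∀ x : Fin n → ℝ, x ⬝ᵥ (R *ᵥ x) ≤ SR * (x ⬝ᵥ x) := by
    intro x
    calc x ⬝ᵥ (R *ᵥ x) ≤ (∑ i, ∑ j, |R i j|) * (x ⬝ᵥ x) := quad_le R x
      _ ≤ SR * (x ⬝ᵥ x) := by
          apply mul_le_mul_of_nonneg_right _ (hdpnn x)
          rw [hSRdef]; linarith
  have hWR : ∀ x : Fin n → ℝ, x ⬝ᵥ (W *ᵥ x) ≤ x ⬝ᵥ (R *ᵥ x) := by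
    intro x
    have hq := hquad x
    nlinarith [psd_nonneg hR (Zᵀ *ᵥ x), sq_nonneg ((G *ᵥ u) ⬝ᵥ x),
      mul_nonneg hcoef0 (sq_nonneg ((G *ᵥ u) ⬝ᵥ x))]
  have hεSR : ε ≤ SR := by
    set x₀ : Fin n → ℝ := fun _ => 1 with hx₀def
    have hx₀ : x₀ ⬝ᵥ x₀ = (n : ℝ) := by simp [dotProduct, hx₀def]
    have h0n : (0:ℝ) < n := by exact_mod_cast hn
    have ha := hWlb x₀
    have hb := hWR x₀
    have hc := hRub x₀
    rw [hx₀] at ha hc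
    nlinarith
  set ρ2 : ℝ := 1 - ε / SR with hρ2def
  have hρ2a : 0 ≤ ρ2 := by
    rw [hρ2def]
    have : ε / SR ≤ 1 := (div_le_one hSR0).2 hεSR
    linarith
  have hρ2b : ρ2 < 1 := by
    rw [hρ2def]
    have : 0 < ε / SR := div_pos hε hSR0
    linarith
  have hdecay : ∀ x : Fin n → ℝ,
      (Zᵀ *ᵥ x) ⬝ᵥ (R *ᵥ (Zᵀ *ᵥ x)) ≤ ρ2 * (x ⬝ᵥ (R *ᵥ x)) := by
    intro x
    have hq := hquad x
    have ha := hWlb x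
    have hb := hRub x
    have h4 : (ε / SR) * (x ⬝ᵥ (R *ᵥ x)) ≤ ε * (x ⬝ᵥ x) := by
      rw [div_mul_eq_mul_div, div_le_iff₀ hSR0]
      nlinarith
    have h3 : 0 ≤ (v * (s⁻¹ * s⁻¹)) * ((G *ᵥ u) ⬝ᵥ x) ^ 2 :=
      mul_nonneg hcoef0 (sq_nonneg _)
    rw [hρ2def]
    nlinarith
  have hiter : ∀ j : ℕ,
      ((Zᵀ) ^ j *ᵥ F) ⬝ᵥ (R *ᵥ ((Zᵀ) ^ j *ᵥ F)) ≤ ρ2 ^ j * (F ⬝ᵥ (R *ᵥ F)) := by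
    intro j
    induction j with
    | zero => simp
    | succ j ih =>
      have hpow : (Zᵀ) ^ (j + 1) *ᵥ F = Zᵀ *ᵥ ((Zᵀ) ^ j *ᵥ F) := by
        rw [pow_succ', mulVec_mulVec]
      rw [hpow]
      calc (Zᵀ *ᵥ ((Zᵀ) ^ j *ᵥ F)) ⬝ᵥ (R *ᵥ (Zᵀ *ᵥ ((Zᵀ) ^ j *ᵥ F)))
          ≤ ρ2 * (((Zᵀ) ^ j *ᵥ F) ⬝ᵥ (R *ᵥ ((Zᵀ) ^ j *ᵥ F))) := hdecay _
        _ ≤ ρ2 * (ρ2 ^ j * (F ⬝ᵥ (R *ᵥ F))) := mul_le_mul_of_nonneg_left ih hρ2a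
        _ = ρ2 ^ (j + 1) * (F ⬝ᵥ (R *ᵥ F)) := by ring
  set w : Fin n → ℝ := G *ᵥ A with hw
  set qF : ℝ := F ⬝ᵥ (R *ᵥ F) with hqF
  have hqF0 : 0 ≤ qF := psd_nonneg hR F
  have hww : 0 ≤ w ⬝ᵥ w := hdpnn w
  have hC0 : 0 ≤ qF * (w ⬝ᵥ w) / ε := by positivity
  refine ⟨Real.sqrt (qF * (w ⬝ᵥ w) / ε), Real.sqrt ρ2, Real.sqrt_nonneg _,
    Real.sqrt_nonneg _, ?_, ?_⟩
  · calc Real.sqrt ρ2 < Real.sqrt 1 := Real.sqrt_lt_sqrt hρ2a hρ2b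
      _ = 1 := Real.sqrt_one
  · intro j
    obtain ⟨y, hy⟩ : ∃ y : Fin n → ℝ, y = (Zᵀ) ^ j *ᵥ F := ⟨_, rfl⟩
    have hθ : F ⬝ᵥ (Z ^ j *ᵥ w) = y ⬝ᵥ w := by
      rw [dotProduct_mulVec, ← mulVec_transpose, transpose_pow, ← hy]
    have hyR := hiter j
    rw [← hy] at hyR
    have hyWR : ε * (y ⬝ᵥ y) ≤ y ⬝ᵥ (R *ᵥ y) := le_trans (hWlb y) (hWR y)
    have hcs : (y ⬝ᵥ w) ^ 2 ≤ (y ⬝ᵥ y) * (w ⬝ᵥ w) := by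
      simpa [dotProduct, mul_pow, sq] using Finset.sum_mul_sq_le_sq_mul_sq Finset.univ y w
    have hyy2 : y ⬝ᵥ y ≤ ρ2 ^ j * qF / ε := by
      rw [le_div_iff₀ hε]
      calc y ⬝ᵥ y * ε = ε * (y ⬝ᵥ y) := mul_comm _ _
        _ ≤ y ⬝ᵥ (R *ᵥ y) := hyWR
        _ ≤ ρ2 ^ j * qF := hyR
    have hb : (y ⬝ᵥ w) ^ 2 ≤ (qF * (w ⬝ᵥ w) / ε) * ρ2 ^ j := by
      calc (y ⬝ᵥ w) ^ 2 ≤ (y ⬝ᵥ y) * (w ⬝ᵥ w) := hcs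
        _ ≤ (ρ2 ^ j * qF / ε) * (w ⬝ᵥ w) :=
            mul_le_mul_of_nonneg_right hyy2 hww
        _ = (qF * (w ⬝ᵥ w) / ε) * ρ2 ^ j := by ring
    rw [hθ]
    have hrhs0 : 0 ≤ Real.sqrt (qF * (w ⬝ᵥ w) / ε) * Real.sqrt ρ2 ^ j :=
      mul_nonneg (Real.sqrt_nonneg _) (pow_nonneg (Real.sqrt_nonneg _) j)
    rw [← pow_le_pow_iff_left₀ (abs_nonneg _) hrhs0 (two_ne_zero), sq_abs]
    calc (y ⬝ᵥ w) ^ 2 ≤ (qF * (w ⬝ᵥ w) / ε) * ρ2 ^ j := hb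
      _ = (Real.sqrt (qF * (w ⬝ᵥ w) / ε) * Real.sqrt ρ2 ^ j) ^ 2 := by
          rw [mul_pow, ← pow_mul, mul_comm j 2, pow_mul, Real.sq_sqrt hC0, Real.sq_sqrt hρ2a]
end

section
/- (Failure of exponential decay of the remainder term without process noise.) Let v > 0 and r_0 > 0, let r_t = r_0·v/(v + t·r_0), A_t = r_t/(r_t + v), and Z_t = v/(r_t + v) = 1 − A_t for t ≥ 0. Let (Y_t)_{t≥0} be a real sequence, and define a_0 = 0 and a_{t+1} = A_t·Y_t + Z_t·a_t. Fix an integer s ≥ 0 and suppose (1/t)·Σ_{i=0}^{t−1} Y_i → m as t → ∞ for some real m. Then the remainder term (Z_t·Z_{t−1} ⋯ Z_{t−s})·a_{t−s} converges to m as t → ∞. In particular, if m ≠ 0, then for no fixed s does the remainder term converge to 0, in contrast to the exponential decay that holds when the process noise is positive. -/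
open Filter Topology BigOperators

/-- Failure of exponential decay of the remainder term without process
noise: With `v > 0`, `r_0 > 0`, `r_t = r_0·v/(v + t·r_0)`, `A_t = r_t/(r_t + v)`,
`Z_t = v/(r_t + v)`, `a_0 = 0` and `a_{t+1} = A_t·Y_t + Z_t·a_t`, if the Cesàro means
`(1/t)·Σ_{i<t} Y_i` converge to `m`, then for any fixed `s ≥ 0` the remainder term
`(Z_t·Z_{t−1} ⋯ Z_{t−s})·a_{t−s}` converges to `m` as `t → ∞`; in particular, if
`m ≠ 0`, the remainder term does not converge to `0`. -/
theorem stmt_17 (v r0 : ℝ) (hv : 0 < v) (hr0 : 0 < r0) (Y : ℕ → ℝ)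
    (r A Z a : ℕ → ℝ)
    (hr : ∀ t : ℕ, r t = r0 * v / (v + t * r0))
    (hA : ∀ t, A t = r t / (r t + v))
    (hZ : ∀ t, Z t = v / (r t + v))
    (ha0 : a 0 = 0)
    (ha : ∀ t, a (t + 1) = A t * Y t + Z t * a t)
    (s : ℕ) (m : ℝ)
    (hcesaro :
      Tendsto (fun t : ℕ => (∑ i ∈ Finset.range t, Y i) / t) atTop (nhds m)) :
    Tendsto (fun t : ℕ => (∏ i ∈ Finset.range (s + 1), Z (t - i)) * a (t - s))
        atTop (nhds m) ∧
    (m ≠ 0 →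
      ¬ Tendsto (fun t : ℕ => (∏ i ∈ Finset.range (s + 1), Z (t - i)) * a (t - s))
          atTop (nhds 0)) := by
  have hpos : ∀ t : ℕ, 0 < v + (t : ℝ) * r0 := by
    intro t; positivity
  have hne : ∀ t : ℕ, v + (t : ℝ) * r0 ≠ 0 := fun t => (hpos t).ne'
  -- denominator r t + v > 0 and formulas
  have hrv : ∀ t : ℕ, r t + v = v * (v + ((t : ℝ) + 1) * r0) / (v + (t : ℝ) * r0) := by
    intro t
    rw [hr t]
    field_simp
    ring
  have hrvne : ∀ t : ℕ, r t + v ≠ 0 := by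
    intro t
    rw [hrv t]
    positivity
  have hZ' : ∀ t : ℕ, Z t = (v + (t : ℝ) * r0) / (v + ((t : ℝ) + 1) * r0) := by
    intro t
    rw [hZ t, hrv t, div_div_eq_mul_div]
    rw [mul_div_mul_left _ _ hv.ne']
  have hA' : ∀ t : ℕ, A t = r0 / (v + ((t : ℝ) + 1) * r0) := by
    intro t
    rw [hA t, hrv t, hr t]
    have h1 := hne t
    have h2 : v + ((t : ℝ) + 1) * r0 ≠ 0 := by positivity
    field_simp
  -- closed form for a
  set S : ℕ → ℝ := fun n => ∑ i ∈ Finset.range n, Y i with hS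
  have haf : ∀ t : ℕ, a t = r0 * S t / (v + (t : ℝ) * r0) := by
    intro t
    induction t with
    | zero => simp [ha0, hS]
    | succ n ih =>
      rw [ha n, ih, hA' n, hZ' n]
      have h1 := hne n
      have h2 : v + ((n : ℝ) + 1) * r0 ≠ 0 := by positivity
      have hcast : ((n + 1 : ℕ) : ℝ) = (n : ℝ) + 1 := by push_cast; ring
      have hSsucc : S (n + 1) = S n + Y n := Finset.sum_range_succ Y n
      rw [hSsucc, hcast]
      field_simp
      ring
  -- telescoping product
  have hprod : ∀ s' t : ℕ, s' ≤ t →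
      (∏ i ∈ Finset.range (s' + 1), Z (t - i))
        = (v + ((t - s' : ℕ) : ℝ) * r0) / (v + ((t : ℝ) + 1) * r0) := by
    intro s'
    induction s' with
    | zero => intro t _; simp [hZ' t]
    | succ k ih =>
      intro t hkt
      rw [Finset.prod_range_succ, ih t (le_of_lt (Nat.lt_of_lt_of_le (Nat.lt_succ_self k) hkt))]
      rw [hZ' (t - (k + 1))]
      have h1 : (t - (k + 1)) + 1 = t - k := by omega
      have h2 : ((t - (k + 1) : ℕ) : ℝ) + 1 = ((t - k : ℕ) : ℝ) := by
        rw [← h1]; push_cast; ring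
      rw [h2]
      have h3 : v + ((t - k : ℕ) : ℝ) * r0 ≠ 0 := hne _
      have h4 : v + ((t : ℝ) + 1) * r0 ≠ 0 := by positivity
      field_simp
  -- the main expression equals (S(t-s)/(t-s)) * ((t-s)*r0/(v+(t+1)r0)) for t ≥ s+1
  have hkey : ∀ t : ℕ, s + 1 ≤ t →
      (∏ i ∈ Finset.range (s + 1), Z (t - i)) * a (t - s)
        = (S (t - s) / ((t - s : ℕ) : ℝ)) *
            (((t - s : ℕ) : ℝ) * r0 / (v + ((t : ℝ) + 1) * r0)) := by
    intro t ht
    rw [hprod s t (by omega), haf (t - s)]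
    have h3 : v + ((t - s : ℕ) : ℝ) * r0 ≠ 0 := hne _
    have h4 : v + ((t : ℝ) + 1) * r0 ≠ 0 := by positivity
    have h5 : ((t - s : ℕ) : ℝ) ≠ 0 := by
      have : 0 < t - s := by omega
      exact_mod_cast (Nat.cast_pos (α := ℝ)).2 this |>.ne'
    field_simp
  -- limits
  have hsub : Tendsto (fun t : ℕ => t - s) atTop atTop := by
    apply tendsto_atTop_atTop.2
    intro b
    exact ⟨b + s, fun a hab => by omega⟩
  have hfac1 : Tendsto (fun t : ℕ => S (t - s) / ((t - s : ℕ) : ℝ)) atTop (nhds m) :=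
    hcesaro.comp hsub
  -- denominator tends to atTop
  have hden : Tendsto (fun t : ℕ => v + ((t : ℝ) + 1) * r0) atTop atTop := by
    apply tendsto_atTop_add_const_left
    apply Filter.Tendsto.atTop_mul_const hr0
    exact tendsto_atTop_add_const_right _ _ tendsto_natCast_atTop_atTop
  have hzero : Tendsto (fun t : ℕ => (v + ((s : ℝ) + 1) * r0) / (v + ((t : ℝ) + 1) * r0))
      atTop (nhds 0) := by
    simpa [div_eq_mul_inv] using
      (hden.inv_tendsto_atTop.const_mul (v + ((s : ℝ) + 1) * r0))
  have hfac2 : Tendsto (fun t : ℕ => ((t - s : ℕ) : ℝ) * r0 / (v + ((t : ℝ) + 1) * r0))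
      atTop (nhds 1) := by
    have heq : ∀ᶠ t : ℕ in atTop,
        1 - (v + ((s : ℝ) + 1) * r0) / (v + ((t : ℝ) + 1) * r0)
          = ((t - s : ℕ) : ℝ) * r0 / (v + ((t : ℝ) + 1) * r0) := by
      filter_upwards [eventually_ge_atTop s] with t ht
      have hc : ((t - s : ℕ) : ℝ) = (t : ℝ) - s := by
        rw [Nat.cast_sub ht]
      have h4 : v + ((t : ℝ) + 1) * r0 ≠ 0 := by positivity
      rw [hc]
      field_simp
      ring
    have : Tendsto (fun t : ℕ => 1 - (v + ((s : ℝ) + 1) * r0) / (v + ((t : ℝ) + 1) * r0))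
        atTop (nhds (1 - 0)) := (tendsto_const_nhds).sub hzero
    rw [sub_zero] at this
    exact this.congr' heq
  have hmain : Tendsto (fun t : ℕ => (∏ i ∈ Finset.range (s + 1), Z (t - i)) * a (t - s))
      atTop (nhds m) := by
    have hlim := hfac1.mul hfac2
    rw [mul_one] at hlim
    apply hlim.congr'
    filter_upwards [eventually_ge_atTop (s + 1)] with t ht
    exact (hkey t ht).symm
  refine ⟨hmain, fun hm h0 => hm (tendsto_nhds_unique hmain h0)⟩
end
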